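/- Let ψ: ℝ → ℝ be C¹ with ψ even, and suppose there exist C>0 and δ>1 such that |ψ(x)| + |x·ψ'(x)| ≤ C·(1+x²)^{-δ/2} for all x ∈ ℝ. Let μ be a probability measure on ℝ with distribution function Φ_μ(t) = μ((−∞, t]). Then for every x ∈ ℝ and a > 0, (ψ_a * μ)(x) = −∫_0^∞ ψ'(y)·(Φ_μ(x+ay) − Φ_μ(x−ay)) dy, where ψ_a(x) = ψ(x/a) and (ψ_a * μ)(x) = ∫_ℝ ψ_a(x−y) dμ(y). -/

import Mathlib

open MeasureTheory Filter Real Set Topology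

/-- Equation (3.1): for even `ψ` with the standing decay assumption and a probability
measure `μ` with distribution function `Φ_μ(t) = μ((-∞,t])`,
`(ψ_a * μ)(x) = -∫_0^∞ ψ'(y) (Φ_μ(x+ay) - Φ_μ(x-ay)) dy`. -/
theorem conv_eq_integral_of_distribution_increments
    (ψ : ℝ → ℝ) (hC1 : ContDiff ℝ 1 ψ)
    (heven : ∀ x : ℝ, ψ (-x) = ψ x)
    (hdecay : ∃ C > (0:ℝ), ∃ δ > (1:ℝ), ∀ x : ℝ,
      |ψ x| + |x * deriv ψ x| ≤ C * (1 + x ^ 2) ^ (-δ / 2))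
    (μ : Measure ℝ) [IsProbabilityMeasure μ] (x : ℝ) (a : ℝ) (ha : 0 < a) :
    ∫ y : ℝ, ψ ((x - y) / a) ∂μ =
      -∫ y in Ioi (0:ℝ),
        deriv ψ y * ((μ (Iic (x + a * y))).toReal - (μ (Iic (x - a * y))).toReal) := by
  obtain ⟨C, hC, δ, hδ, hbound⟩ := hdecay
  set g := deriv ψ with hg
  have hψc : Continuous ψ := hC1.continuous
  have hgc : Continuous g := hC1.continuous_deriv le_rfl
  have hder : ∀ t : ℝ, HasDerivAt ψ (g t) t := fun t =>
    ((hC1.differentiable one_ne_zero) t).hasDerivAt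
  have hψ_bd : ∀ t : ℝ, |ψ t| ≤ C * (1 + t ^ 2) ^ (-δ / 2) := fun t =>
    le_trans (le_add_of_nonneg_right (abs_nonneg _)) (hbound t)
  have hg_bd : ∀ t : ℝ, |t * g t| ≤ C * (1 + t ^ 2) ^ (-δ / 2) := fun t =>
    le_trans (le_add_of_nonneg_left (abs_nonneg _)) (hbound t)
  -- ψ tends to 0 at +∞
  have htend : Tendsto ψ atTop (𝓝 0) := by
    have h1 : Tendsto (fun t : ℝ => (1 + t ^ 2)) atTop atTop :=
      tendsto_atTop_add_const_left _ _ (tendsto_pow_atTop two_ne_zero)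
    have h2 : Tendsto (fun t : ℝ => C * (1 + t ^ 2) ^ (-δ / 2)) atTop (𝓝 (C * 0)) := by
      apply Tendsto.const_mul
      have := (tendsto_rpow_neg_atTop (by linarith : (0:ℝ) < δ / 2)).comp h1
      simpa [Function.comp_def, neg_div] using this
    rw [mul_zero] at h2
    exact squeeze_zero_norm (fun t => by
      simpa [Real.norm_eq_abs] using hψ_bd t) h2
  -- integrability of g on (0, ∞)
  have hg_int : IntegrableOn g (Ioi (0:ℝ)) := by
    have h01 : IntegrableOn g (Ioc (0:ℝ) 1) :=
      (hgc.integrableOn_Icc (a := 0) (b := 1)).mono_set Ioc_subset_Icc_self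
    have h1i : IntegrableOn g (Ioi (1:ℝ)) := by
      have hint : IntegrableOn (fun t : ℝ => C * t ^ (-δ - 1)) (Ioi (1:ℝ)) :=
        (integrableOn_Ioi_rpow_of_lt (by linarith) one_pos).const_mul C
      refine hint.mono' hgc.aestronglyMeasurable ?_
      filter_upwards [ae_restrict_mem measurableSet_Ioi] with t ht
      have ht1 : (1:ℝ) < t := ht
      have ht0 : (0:ℝ) < t := lt_trans one_pos ht1
      have h2 : (1 + t ^ 2) ^ (-δ / 2) ≤ (t ^ 2) ^ (-δ / 2) :=
        Real.rpow_le_rpow_of_nonpos (by positivity) (by linarith) (by linarith)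
      have h3 : ((t ^ 2 : ℝ)) ^ (-δ / 2) = t ^ (-δ) := by
        rw [← Real.rpow_natCast t 2, ← Real.rpow_mul ht0.le]
        congr 1
        ring
      have h4 : |g t| * t ≤ C * (1 + t ^ 2) ^ (-δ / 2) := by
        have := hg_bd t
        rwa [abs_mul, abs_of_pos ht0, mul_comm] at this
      have h5 : C * (1 + t ^ 2) ^ (-δ / 2) ≤ C * t ^ (-δ) := by
        rw [← h3]; exact mul_le_mul_of_nonneg_left h2 hC.le
      have h6 : t ^ (-δ - 1) = t ^ (-δ) * t⁻¹ := by
        rw [show -δ - 1 = -δ + (-1) by ring, Real.rpow_add ht0, Real.rpow_neg_one]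
      have h7 : |g t| ≤ C * t ^ (-δ) / t := by
        rw [le_div_iff₀ ht0]; exact le_trans h4 h5
      calc ‖g t‖ = |g t| := rfl
        _ ≤ C * t ^ (-δ) / t := h7
        _ = C * t ^ (-δ - 1) := by rw [h6]; ring
    rw [← Ioc_union_Ioi_eq_Ioi (zero_le_one (α := ℝ))]
    exact h01.union h1i
  -- FTC on half-lines
  have key1 : ∀ u : ℝ, 0 ≤ u → ∫ t in Ioi u, g t = -ψ u := by
    intro u hu
    have h := integral_Ioi_of_hasDerivAt_of_tendsto (f := ψ) (f' := g)
      hψc.continuousWithinAt (fun t _ => hder t)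
      (hg_int.mono_set (Ioi_subset_Ioi hu)) htend
    simpa using h
  have habs : ∀ u : ℝ, ψ |u| = ψ u := by
    intro u
    rcases abs_cases u with ⟨h, _⟩ | ⟨h, _⟩
    · rw [h]
    · rw [h]; exact heven u
  -- the layered function
  set F : ℝ → ℝ → ℝ := fun y t =>
    Set.indicator {s : ℝ | x - a * s < y ∧ y ≤ x + a * s} g t with hF
  have hS : ∀ y : ℝ, MeasurableSet {s : ℝ | x - a * s < y ∧ y ≤ x + a * s} := by
    intro y
    rw [Set.setOf_and]
    exact (measurableSet_lt (by fun_prop) measurable_const).inter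
      (measurableSet_le measurable_const (by fun_prop))
  -- inner t-integral computes ψ
  have hinner : ∀ y : ℝ, ∫ t in Ioi (0:ℝ), F y t = -ψ ((x - y) / a) := by
    intro y
    rw [hF]
    rw [setIntegral_indicator (hS y)]
    have hAE : ((Ioi (0:ℝ) ∩ {s : ℝ | x - a * s < y ∧ y ≤ x + a * s} : Set ℝ))
        =ᵐ[volume] (Ioi (|x - y| / a) : Set ℝ) := by
      have hne : ∀ᵐ t : ℝ, t ≠ (y - x) / a := by
        rw [ae_iff]
        simpa using measure_singleton ((y - x) / a)
      filter_upwards [hne] with t ht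
      rw [eq_iff_iff]
      show t ∈ Ioi (0:ℝ) ∩ {s : ℝ | x - a * s < y ∧ y ≤ x + a * s} ↔
        t ∈ Ioi (|x - y| / a)
      simp only [mem_inter_iff, mem_Ioi, mem_setOf_eq]
      rw [div_lt_iff₀ ha, abs_lt]
      constructor
      · rintro ⟨ht0, h1, h2⟩
        refine ⟨lt_of_le_of_ne (by linarith) ?_, by linarith⟩
        intro hcontra
        apply ht
        field_simp
        linarith
      · rintro ⟨hl, hr⟩
        exact ⟨by nlinarith, by linarith, by linarith⟩
    rw [setIntegral_congr_set hAE, key1 _ (by positivity)]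
    have : |x - y| / a = |(x - y) / a| := by
      rw [abs_div, abs_of_pos ha]
    rw [this, habs]
  -- measurability of the joint function
  have hFp_meas : AEStronglyMeasurable (fun z : ℝ × ℝ => F z.1 z.2)
      (μ.prod (volume.restrict (Ioi 0))) := by
    have hE : MeasurableSet {z : ℝ × ℝ | x - a * z.2 < z.1 ∧ z.1 ≤ x + a * z.2} := by
      rw [Set.setOf_and]
      exact (measurableSet_lt (by fun_prop) (by fun_prop)).inter
        (measurableSet_le (by fun_prop) (by fun_prop))
    have : (fun z : ℝ × ℝ => F z.1 z.2) =
        Set.indicator {z : ℝ × ℝ | x - a * z.2 < z.1 ∧ z.1 ≤ x + a * z.2}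
          (fun z => g z.2) := by
      funext z
      simp [hF, Set.indicator_apply, mem_setOf_eq]
    rw [this]
    exact ((hgc.measurable.comp measurable_snd).indicator hE).aestronglyMeasurable
  have hF_norm : ∀ y t : ℝ, ‖F y t‖ ≤ ‖g t‖ := by
    intro y t
    exact norm_indicator_le_norm_self g t
  have hF_meas_t : ∀ y : ℝ, AEStronglyMeasurable (fun t => F y t)
      (volume.restrict (Ioi 0)) := fun y =>
    (hgc.measurable.indicator (hS y)).aestronglyMeasurable
  have hF_int_t : ∀ y : ℝ, Integrable (fun t => F y t) (volume.restrict (Ioi 0)) := by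
    intro y
    exact Integrable.mono' hg_int.norm (hF_meas_t y) (ae_of_all _ fun t => hF_norm y t)
  -- joint integrability
  have hFp_int : Integrable (fun z : ℝ × ℝ => F z.1 z.2)
      (μ.prod (volume.restrict (Ioi 0))) := by
    rw [integrable_prod_iff hFp_meas]
    refine ⟨ae_of_all _ fun y => hF_int_t y, ?_⟩
    refine Integrable.mono' (integrable_const (∫ t in Ioi (0:ℝ), ‖g t‖))
      hFp_meas.norm.integral_prod_right' (ae_of_all _ fun y => ?_)
    have h1 : ∫ t in Ioi (0:ℝ), ‖F y t‖ ≤ ∫ t in Ioi (0:ℝ), ‖g t‖ :=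
      integral_mono (hF_int_t y).norm hg_int.norm (fun t => hF_norm y t)
    have h2 : 0 ≤ ∫ t in Ioi (0:ℝ), ‖F y t‖ :=
      integral_nonneg fun t => norm_nonneg _
    rw [Real.norm_eq_abs, abs_of_nonneg h2]
    exact h1
  have hswap := integral_integral_swap (f := F) hFp_int
  -- conclusion
  calc ∫ y : ℝ, ψ ((x - y) / a) ∂μ
      = ∫ y : ℝ, (-∫ t in Ioi (0:ℝ), F y t) ∂μ := by
        refine integral_congr_ae (ae_of_all _ fun y => ?_)
        show ψ ((x - y) / a) = -∫ t in Ioi (0:ℝ), F y t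
        rw [hinner y, neg_neg]
    _ = -∫ y : ℝ, (∫ t in Ioi (0:ℝ), F y t) ∂μ := integral_neg _
    _ = -∫ t in Ioi (0:ℝ), ∫ y : ℝ, F y t ∂μ := by rw [hswap]
    _ = -∫ t in Ioi (0:ℝ),
          g t * ((μ (Iic (x + a * t))).toReal - (μ (Iic (x - a * t))).toReal) := by
        congr 1
        refine setIntegral_congr_fun measurableSet_Ioi fun t ht => ?_
        have ht0 : (0:ℝ) < t := ht
        have hFy : ∀ y : ℝ, F y t =
            (Ioc (x - a * t) (x + a * t)).indicator (fun _ => g t) y := by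
          intro y
          simp [hF, Set.indicator_apply, Set.mem_Ioc, mem_setOf_eq]
        have hlr : x - a * t ≤ x + a * t := by nlinarith [mul_pos ha ht0]
        have hsum : μ (Iic (x - a * t)) + μ (Ioc (x - a * t) (x + a * t)) =
            μ (Iic (x + a * t)) := by
          rw [← measure_union (Iic_disjoint_Ioc le_rfl) measurableSet_Ioc,
            Iic_union_Ioc_eq_Iic hlr]
        have hfin1 := measure_ne_top μ (Iic (x - a * t))
        have hfin2 := measure_ne_top μ (Ioc (x - a * t) (x + a * t))
        have htoReal : (μ (Ioc (x - a * t) (x + a * t))).toReal =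
            (μ (Iic (x + a * t))).toReal - (μ (Iic (x - a * t))).toReal := by
          rw [← hsum, ENNReal.toReal_add hfin1 hfin2]
          ring
        calc ∫ y : ℝ, F y t ∂μ
            = ∫ y : ℝ, (Ioc (x - a * t) (x + a * t)).indicator (fun _ => g t) y ∂μ := by
              refine integral_congr_ae (ae_of_all _ fun y => hFy y)
          _ = (μ (Ioc (x - a * t) (x + a * t))).toReal • g t :=
              integral_indicator_const (g t) measurableSet_Ioc
          _ = g t * ((μ (Iic (x + a * t))).toReal - (μ (Iic (x - a * t))).toReal) := by
              rw [htoReal, smul_eq_mul, mul_comm]
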